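/- For every n ≥ 1, the second nilpotent product (Z/nZ) *₂ (Z/nZ) is isomorphic to the Heisenberg group of upper unitriangular 3×3 matrices over Z/nZ. -/

import Mathlib

open Monoid
open scoped commutatorElement

/-- The normal subgroup of the free product `A ∗ B` generated by commutators
`⁅x, ⁅a, b⁆⁆` with `x ∈ A ∗ B`, `a ∈ A`, `b ∈ B`. -/
def nil2Rel (A B : Type*) [Group A] [Group B] : Subgroup (Coprod A B) :=
  Subgroup.normalClosure
    {z | ∃ (x : Coprod A B) (a : A) (b : B), z = ⁅x, ⁅(Coprod.inl a : Coprod A B), Coprod.inr b⁆⁆}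

instance (A B : Type*) [Group A] [Group B] : (nil2Rel A B).Normal :=
  Subgroup.normalClosure_normal

/-- The second nilpotent product `A *₂ B = (A ∗ B)/[A ∗ B, [A,B]]`. -/
def Nil2 (A B : Type*) [Group A] [Group B] : Type _ :=
  Coprod A B ⧸ nil2Rel A B

instance (A B : Type*) [Group A] [Group B] : Group (Nil2 A B) :=
  QuotientGroup.Quotient.group _

/-- Canonical map `A → A *₂ B`. -/
def Nil2.inl {A B : Type*} [Group A] [Group B] : A →* Nil2 A B :=
  (QuotientGroup.mk' (nil2Rel A B)).comp Coprod.inl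

/-- Canonical map `B → A *₂ B`. -/
def Nil2.inr {A B : Type*} [Group A] [Group B] : B →* Nil2 A B :=
  (QuotientGroup.mk' (nil2Rel A B)).comp Coprod.inr

/-- The subgroup `[A,B]⁽²⁾` of `A *₂ B` generated by the commutators `⁅a, b⁆`. -/
def commSubgroup (A B : Type*) [Group A] [Group B] : Subgroup (Nil2 A B) :=
  Subgroup.closure {z | ∃ (a : A) (b : B), z = ⁅(Nil2.inl a : Nil2 A B), Nil2.inr b⁆}

/-- The Heisenberg group of upper unitriangular `3 × 3` matrices over `R`, as a subgroup
of the units of the matrix ring. -/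
def Heis (R : Type*) [CommRing R] : Subgroup (Matrix (Fin 3) (Fin 3) R)ˣ where
  carrier := {M | ∃ a b c : R, (M : Matrix (Fin 3) (Fin 3) R) = !![1, a, c; 0, 1, b; 0, 0, 1]}
  one_mem' := ⟨0, 0, 0, by simp [Matrix.one_fin_three]⟩
  mul_mem' := by
    rintro M N ⟨a, b, c, hM⟩ ⟨a', b', c', hN⟩
    refine ⟨a + a', b + b', c + c' + a * b', ?_⟩
    rw [Units.val_mul, hM, hN, Matrix.mul_fin_three]
    congr 1 <;> ring
  inv_mem' := by
    rintro M ⟨a, b, c, hM⟩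
    refine ⟨-a, -b, -c + a * b, ?_⟩
    have h : (M : Matrix (Fin 3) (Fin 3) R) *
        !![1, -a, -c + a * b; 0, 1, -b; 0, 0, 1] = 1 := by
      rw [hM, Matrix.mul_fin_three, Matrix.one_fin_three]
      congr 1 <;> ring
    calc (↑M⁻¹ : Matrix (Fin 3) (Fin 3) R)
        = ↑M⁻¹ * ((M : Matrix (Fin 3) (Fin 3) R) *
            !![1, -a, -c + a * b; 0, 1, -b; 0, 0, 1]) := by rw [h, mul_one]
      _ = !![1, -a, -c + a * b; 0, 1, -b; 0, 0, 1] := by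
            rw [← mul_assoc, Units.inv_mul, one_mul]

section Stmt14Aux

open Monoid

variable {R : Type*} [CommRing R]

private def heisMat (a b c : R) : Matrix (Fin 3) (Fin 3) R := !![1, a, c; 0, 1, b; 0, 0, 1]

private lemma heisMat_mul (a b c a' b' c' : R) :
    heisMat a b c * heisMat a' b' c' = heisMat (a + a') (b + b') (c + c' + a * b') := by
  unfold heisMat
  rw [Matrix.mul_fin_three]
  congr 1 <;> ring

private lemma heisMat_zero : heisMat (0 : R) 0 0 = 1 := by
  simp [heisMat, Matrix.one_fin_three]

private def heisUnit (a b c : R) : (Matrix (Fin 3) (Fin 3) R)ˣ where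
  val := heisMat a b c
  inv := heisMat (-a) (-b) (-c + a * b)
  val_inv := by rw [heisMat_mul, ← heisMat_zero]; congr 1 <;> ring
  inv_val := by rw [heisMat_mul, ← heisMat_zero]; congr 1 <;> ring

private def HeisElt (a b c : R) : Heis R := ⟨heisUnit a b c, ⟨a, b, c, rfl⟩⟩

private lemma HeisElt_mul (a b c a' b' c' : R) :
    HeisElt a b c * HeisElt a' b' c' = HeisElt (a + a') (b + b') (c + c' + a * b') := by
  apply Subtype.ext; apply Units.ext
  exact heisMat_mul a b c a' b' c'

private lemma HeisElt_one : HeisElt (0 : R) 0 0 = 1 := by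
  apply Subtype.ext; apply Units.ext
  exact heisMat_zero

private lemma HeisElt_inv (a b c : R) :
    (HeisElt a b c)⁻¹ = HeisElt (-a) (-b) (-c + a * b) := by
  apply inv_eq_of_mul_eq_one_right
  rw [HeisElt_mul, ← HeisElt_one]; congr 1 <;> ring

private lemma HeisElt_inj {a b c a' b' c' : R} (h : HeisElt a b c = HeisElt a' b' c') :
    a = a' ∧ b = b' ∧ c = c' := by
  have h2 : heisMat a b c = heisMat a' b' c' :=
    congrArg (fun x : Heis R => ((x : (Matrix (Fin 3) (Fin 3) R)ˣ) : Matrix (Fin 3) (Fin 3) R)) h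
  refine ⟨?_, ?_, ?_⟩
  · have := congrFun (congrFun h2 0) 1; simpa [heisMat] using this
  · have := congrFun (congrFun h2 1) 2; simpa [heisMat] using this
  · have := congrFun (congrFun h2 0) 2; simpa [heisMat] using this

private lemma Heis_eq_heisElt (M : Heis R) : ∃ a b c : R, M = HeisElt a b c := by
  obtain ⟨u, a, b, c, hu⟩ := M
  exact ⟨a, b, c, Subtype.ext (Units.ext hu)⟩

private lemma HeisElt_comm (a b : R) :
    ⁅HeisElt a 0 0, HeisElt 0 b 0⁆ = HeisElt 0 0 (a * b) := by
  rw [commutatorElement_def, HeisElt_inv, HeisElt_inv, HeisElt_mul, HeisElt_mul, HeisElt_mul]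
  congr 1 <;> ring

private lemma HeisElt_central (c : R) (X : Heis R) :
    HeisElt 0 0 c * X = X * HeisElt 0 0 c := by
  obtain ⟨a, b, c', rfl⟩ := Heis_eq_heisElt X
  rw [HeisElt_mul, HeisElt_mul]; congr 1 <;> ring

end Stmt14Aux

section Stmt14Grp

open Monoid Multiplicative

private lemma comm_mul_left {G : Type*} [Group G] (x y z : G)
    (h : ∀ g, Commute g ⁅y, z⁆) : ⁅x * y, z⁆ = ⁅x, z⁆ * ⁅y, z⁆ := by
  have h1 : ⁅x * y, z⁆ = x * ⁅y, z⁆ * x⁻¹ * ⁅x, z⁆ := by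
    simp only [commutatorElement_def]; group
  rw [h1, (h x).eq, mul_assoc ⁅y, z⁆ x x⁻¹, mul_inv_cancel, mul_one, (h ⁅x,z⁆).symm.eq]

private lemma comm_mul_right {G : Type*} [Group G] (x y z : G)
    (h : ∀ g, Commute g ⁅x, z⁆) : ⁅x, y * z⁆ = ⁅x, y⁆ * ⁅x, z⁆ := by
  have h1 : ⁅x, y * z⁆ = ⁅x, y⁆ * (y * ⁅x, z⁆ * y⁻¹) := by
    simp only [commutatorElement_def]; group
  rw [h1, (h y).eq, mul_assoc ⁅x, z⁆ y y⁻¹, mul_inv_cancel, mul_one]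

variable (n : ℕ) [NeZero n]

private abbrev An := Multiplicative (ZMod n)

private abbrev Gn := Nil2 (An n) (An n)

private def cG (a b : An n) : Gn n := ⁅(Nil2.inl a : Nil2 (An n) (An n)), Nil2.inr b⁆

private lemma cG_central (a b : An n) (x : Gn n) : Commute x (cG n a b) := by
  rw [← commutatorElement_eq_one_iff_commute]
  induction x using QuotientGroup.induction_on with
  | H w =>
    let p : Coprod (An n) (An n) →* Gn n := QuotientGroup.mk' (nil2Rel (An n) (An n))
    have h1 : (⁅(p w : Gn n), cG n a b⁆ : Gn n)
        = p ⁅w, ⁅(Coprod.inl a : Coprod (An n) (An n)), Coprod.inr b⁆⁆ := by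
      rw [map_commutatorElement, map_commutatorElement]
      rfl
    show ⁅p w, cG n a b⁆ = 1
    rw [h1]
    exact (QuotientGroup.eq_one_iff _).mpr (Subgroup.subset_normalClosure ⟨w, a, b, rfl⟩)

private lemma cG_one_left (b : An n) : cG n 1 b = 1 := by
  simp [cG]

private lemma cG_one_right (a : An n) : cG n a 1 = 1 := by
  simp [cG]

private lemma cG_mul_left (a a' b : An n) : cG n (a * a') b = cG n a b * cG n a' b := by
  have := comm_mul_left (Nil2.inl a : Gn n) (Nil2.inl a') (Nil2.inr b) (fun g => cG_central n a' b g)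
  simpa [cG, map_mul] using this

private lemma cG_mul_right (a b b' : An n) : cG n a (b * b') = cG n a b * cG n a b' := by
  have := comm_mul_right (Nil2.inl a : Gn n) (Nil2.inr b) (Nil2.inr b') (fun g => cG_central n a b' g)
  simpa [cG, map_mul] using this

private lemma cG_pow_left (a b : An n) (k : ℕ) : cG n (a ^ k) b = (cG n a b) ^ k := by
  induction k with
  | zero => simpa using cG_one_left n b
  | succ k ih => rw [pow_succ, cG_mul_left, ih, pow_succ]

private lemma cG_pow_right (a b : An n) (k : ℕ) : cG n a (b ^ k) = (cG n a b) ^ k := by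
  induction k with
  | zero => simpa using cG_one_right n a
  | succ k ih => rw [pow_succ, cG_mul_right, ih, pow_succ]

private def zG : Gn n := cG n (ofAdd 1) (ofAdd 1)

private lemma ofAdd_one_pow (k : ℕ) :
    (ofAdd (1 : ZMod n)) ^ k = ofAdd ((k : ZMod n)) := by
  rw [← ofAdd_nsmul]
  norm_num

private lemma ofAdd_eq_pow (x : ZMod n) : ofAdd x = (ofAdd (1 : ZMod n)) ^ x.val := by
  rw [ofAdd_one_pow, ZMod.natCast_rightInverse x]

private lemma cG_eq (x y : ZMod n) :
    cG n (ofAdd x) (ofAdd y) = zG n ^ (x.val * y.val) := by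
  rw [ofAdd_eq_pow n x, ofAdd_eq_pow n y, cG_pow_left, cG_pow_right, ← pow_mul, zG]
  ring_nf

private lemma zG_pow_n : zG n ^ n = 1 := by
  rw [zG, ← cG_pow_right, ofAdd_one_pow, ZMod.natCast_self]
  simpa using cG_one_right n (ofAdd 1)

private lemma zG_pow_mod (k : ℕ) : zG n ^ k = zG n ^ (k % n) := by
  conv_lhs => rw [← Nat.div_add_mod k n]
  rw [pow_add, pow_mul, zG_pow_n, one_pow, one_mul]

private lemma zG_pow_natCast (k : ℕ) : zG n ^ k = zG n ^ ((k : ZMod n)).val := by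
  rw [ZMod.val_natCast, ← zG_pow_mod]

private lemma zG_central (x : Gn n) : Commute x (zG n) := cG_central n _ _ x

end Stmt14Grp

section Stmt14Main

open Monoid Multiplicative

variable (n : ℕ) [NeZero n]

private def fX : An n →* Heis (ZMod n) where
  toFun a := HeisElt a.toAdd 0 0
  map_one' := by simpa using HeisElt_one
  map_mul' a a' := by rw [HeisElt_mul]; simp

private def fY : An n →* Heis (ZMod n) where
  toFun b := HeisElt 0 b.toAdd 0
  map_one' := by simpa using HeisElt_one
  map_mul' b b' := by rw [HeisElt_mul]; simp

private lemma ker_lemma : nil2Rel (An n) (An n) ≤ (Coprod.lift (fX n) (fY n)).ker := by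
  apply Subgroup.normalClosure_le_normal
  rintro z ⟨x, a, b, rfl⟩
  rw [SetLike.mem_coe, MonoidHom.mem_ker, map_commutatorElement, map_commutatorElement,
    Coprod.lift_apply_inl, Coprod.lift_apply_inr]
  have h1 : (fX n) a = HeisElt a.toAdd 0 0 := rfl
  have h2 : (fY n) b = HeisElt 0 b.toAdd 0 := rfl
  rw [h1, h2, HeisElt_comm]
  exact commutatorElement_eq_one_iff_commute.mpr
    (HeisElt_central (a.toAdd * b.toAdd) (Coprod.lift (fX n) (fY n) x)).symm

private def phiN : Gn n →* Heis (ZMod n) :=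
  QuotientGroup.lift (nil2Rel (An n) (An n)) (Coprod.lift (fX n) (fY n))
    (fun _ hx => MonoidHom.mem_ker.mp (ker_lemma n hx))

private lemma phiN_inl (a : An n) : phiN n (Nil2.inl a) = HeisElt a.toAdd 0 0 := rfl

private lemma phiN_inr (b : An n) : phiN n (Nil2.inr b) = HeisElt 0 b.toAdd 0 := rfl

private lemma phiN_cG (a b : An n) :
    phiN n (cG n a b) = HeisElt 0 0 (a.toAdd * b.toAdd) := by
  rw [cG, map_commutatorElement, phiN_inl, phiN_inr]
  exact HeisElt_comm _ _

private lemma HeisElt_pow (c : ZMod n) (k : ℕ) :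
    (HeisElt (0 : ZMod n) 0 c) ^ k = HeisElt 0 0 (k * c) := by
  induction k with
  | zero => simpa using HeisElt_one.symm
  | succ k ih =>
    rw [pow_succ, ih, HeisElt_mul]
    push_cast
    ring_nf

private def psiN (a b c : ZMod n) : Gn n :=
  Nil2.inr (ofAdd b) * Nil2.inl (ofAdd a) * zG n ^ c.val

private lemma phiN_psiN (a b c : ZMod n) : phiN n (psiN n a b c) = HeisElt a b c := by
  have hz : phiN n (zG n) = HeisElt 0 0 1 := by
    rw [zG, phiN_cG]; simp
  rw [psiN, map_mul, map_mul, map_pow, hz, phiN_inl, phiN_inr, HeisElt_pow, toAdd_ofAdd,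
    toAdd_ofAdd, HeisElt_mul, HeisElt_mul]
  rw [ZMod.natCast_rightInverse c]
  ring_nf

private lemma natCast_valmix (a b c c' : ZMod n) :
    ((a.val * b.val + (c.val + c'.val) : ℕ) : ZMod n) = c + c' + a * b := by
  push_cast
  rw [ZMod.natCast_rightInverse a, ZMod.natCast_rightInverse b,
    ZMod.natCast_rightInverse c, ZMod.natCast_rightInverse c']
  ring

private lemma psiN_mul (a b c a' b' c' : ZMod n) :
    psiN n a b c * psiN n a' b' c' = psiN n (a + a') (b + b') (c + c' + a * b') := by
  have hz : ∀ (g : Gn n) (k : ℕ), g * zG n ^ k = zG n ^ k * g :=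
    fun g k => ((zG_central n g).pow_right k).eq
  have hJI : ∀ x y : ZMod n,
      (Nil2.inl (ofAdd x) : Gn n) * Nil2.inr (ofAdd y)
        = Nil2.inr (ofAdd y) * Nil2.inl (ofAdd x) * zG n ^ (x.val * y.val) := by
    intro x y
    have h1 : (⁅(Nil2.inl (ofAdd x) : Gn n), Nil2.inr (ofAdd y)⁆ : Gn n)
        = zG n ^ (x.val * y.val) := cG_eq n x y
    have h2 : (Nil2.inl (ofAdd x) : Gn n) * Nil2.inr (ofAdd y)
        = ⁅(Nil2.inl (ofAdd x) : Gn n), Nil2.inr (ofAdd y)⁆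
          * (Nil2.inr (ofAdd y) * Nil2.inl (ofAdd x)) := by
      simp only [commutatorElement_def]; group
    rw [h2, h1, ← hz]
  have hI : (Nil2.inr (ofAdd b) : Gn n) * Nil2.inr (ofAdd b')
      = (Nil2.inr (ofAdd (b + b')) : Gn n) := by rw [← map_mul]; rfl
  have hJ : (Nil2.inl (ofAdd a) : Gn n) * Nil2.inl (ofAdd a')
      = (Nil2.inl (ofAdd (a + a')) : Gn n) := by rw [← map_mul]; rfl
  have hcast : ((a.val * b'.val + (c.val + c'.val) : ℕ) : ZMod n) = c + c' + a * b' :=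
    natCast_valmix n a b' c c'
  have hzz : zG n ^ (a.val * b'.val) * (zG n ^ c.val * zG n ^ c'.val)
      = zG n ^ ((c + c' + a * b').val) := by
    rw [← pow_add, ← pow_add, zG_pow_natCast n _, hcast]
  calc psiN n a b c * psiN n a' b' c'
      = Nil2.inr (ofAdd b) * Nil2.inl (ofAdd a)
          * (zG n ^ c.val * (Nil2.inr (ofAdd b') * Nil2.inl (ofAdd a'))) * zG n ^ c'.val := by
        rw [psiN, psiN]; group
    _ = Nil2.inr (ofAdd b) * Nil2.inl (ofAdd a)
          * ((Nil2.inr (ofAdd b') * Nil2.inl (ofAdd a')) * zG n ^ c.val) * zG n ^ c'.val := by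
        rw [hz (Nil2.inr (ofAdd b') * Nil2.inl (ofAdd a')) c.val]
    _ = Nil2.inr (ofAdd b) * ((Nil2.inl (ofAdd a) * Nil2.inr (ofAdd b')) * Nil2.inl (ofAdd a'))
          * (zG n ^ c.val * zG n ^ c'.val) := by group
    _ = Nil2.inr (ofAdd b) * ((Nil2.inr (ofAdd b') * Nil2.inl (ofAdd a)
          * zG n ^ (a.val * b'.val)) * Nil2.inl (ofAdd a'))
          * (zG n ^ c.val * zG n ^ c'.val) := by rw [hJI a b']
    _ = Nil2.inr (ofAdd b) * (Nil2.inr (ofAdd b') * Nil2.inl (ofAdd a)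
          * (zG n ^ (a.val * b'.val) * Nil2.inl (ofAdd a')))
          * (zG n ^ c.val * zG n ^ c'.val) := by group
    _ = Nil2.inr (ofAdd b) * (Nil2.inr (ofAdd b') * Nil2.inl (ofAdd a)
          * (Nil2.inl (ofAdd a') * zG n ^ (a.val * b'.val)))
          * (zG n ^ c.val * zG n ^ c'.val) := by rw [← hz (Nil2.inl (ofAdd a')) (a.val * b'.val)]
    _ = (Nil2.inr (ofAdd b) * Nil2.inr (ofAdd b')) * (Nil2.inl (ofAdd a) * Nil2.inl (ofAdd a'))
          * (zG n ^ (a.val * b'.val) * (zG n ^ c.val * zG n ^ c'.val)) := by group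
    _ = psiN n (a + a') (b + b') (c + c' + a * b') := by
        rw [hI, hJ, hzz, psiN]

private lemma psiN_surj (g : Gn n) : ∃ a b c : ZMod n, g = psiN n a b c := by
  induction g using QuotientGroup.induction_on with
  | H w =>
    induction w using Coprod.induction_on with
    | inl a =>
      refine ⟨a.toAdd, 0, 0, ?_⟩
      rw [psiN]
      simp [ZMod.val_zero]
      rfl
    | inr b =>
      refine ⟨0, b.toAdd, 0, ?_⟩
      rw [psiN]
      simp [ZMod.val_zero]
      rfl
    | mul x y hx hy =>
      obtain ⟨a, b, c, hx⟩ := hx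
      obtain ⟨a', b', c', hy⟩ := hy
      refine ⟨a + a', b + b', c + c' + a * b', ?_⟩
      have hxy : (QuotientGroup.mk (x * y) : Gn n)
          = QuotientGroup.mk x * QuotientGroup.mk y := rfl
      rw [hxy, hx, hy]; exact psiN_mul n a b c a' b' c'

end Stmt14Main


/-- For `n ≥ 1`, `(ℤ/nℤ) *₂ (ℤ/nℤ)` is isomorphic to the Heisenberg group of upper
unitriangular `3 × 3` matrices over `ℤ/nℤ`. -/
theorem stmt14 (n : ℕ) (hn : 1 ≤ n) :
    Nonempty (Nil2 (Multiplicative (ZMod n)) (Multiplicative (ZMod n)) ≃*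
      Heis (ZMod n)) := by
  haveI : NeZero n := ⟨by omega⟩
  refine ⟨MulEquiv.ofBijective (phiN n) ⟨?_, ?_⟩⟩
  · intro x y h
    obtain ⟨a, b, c, rfl⟩ := psiN_surj n x
    obtain ⟨a', b', c', rfl⟩ := psiN_surj n y
    rw [phiN_psiN, phiN_psiN] at h
    obtain ⟨ha, hb, hc⟩ := HeisElt_inj h
    rw [ha, hb, hc]
  · intro M
    obtain ⟨a, b, c, rfl⟩ := Heis_eq_heisElt M
    exact ⟨psiN n a b c, phiN_psiN n a b c⟩
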